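/- Let n be a nonnegative integer and a₀,…,a₄, b₀,…,b₃, c₀,…,c₂ real numbers satisfying b₃ = −2(n−1)a₄, c₁ = −n((n−1)a₃ + b₂), c₂ = n(n−1)a₄. Set X(x) = Σ_{k=0}^{4} a_k x^k, Y(x) = Σ_{k=0}^{3} b_k x^k, Z(x) = Σ_{k=0}^{2} c_k x^k. Then for every twice continuously differentiable function y : ℝ → ℝ and every x ∈ ℝ, X(x)y″(x) + Y(x)y′(x) + Z(x)y(x) = a₄(J⁺J⁺y)(x) − a₃(J⁺J⁰y)(x) + a₂(J⁰J⁰y)(x) + a₁(J⁰J⁻y)(x) + a₀(J⁻J⁻y)(x) − ((3n−2)/2·a₃ + b₂)(J⁺y)(x) + ((n−1)a₂ + b₁)(J⁰y)(x) + (n/2·a₁ + b₀)(J⁻y)(x) + ((n/2)·((n/2 − 1)a₂ + b₁) + c₀)·y(x). -/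

import Mathlib

/-- `(J⁺y)(x) = -x²y'(x) + n x y(x)` -/
noncomputable def Jp (n : ℕ) (y : ℝ → ℝ) : ℝ → ℝ :=
  fun x => -x ^ 2 * deriv y x + (n : ℝ) * x * y x

/-- `(J⁰y)(x) = x y'(x) - (n/2) y(x)` -/
noncomputable def J0 (n : ℕ) (y : ℝ → ℝ) : ℝ → ℝ :=
  fun x => x * deriv y x - ((n : ℝ) / 2) * y x

/-- `(J⁻y)(x) = y'(x)` -/
noncomputable def Jm (y : ℝ → ℝ) : ℝ → ℝ := fun x => deriv y x

/-- The sl(2) representation of the QES operator `𝓗' = X d²/dx² + Y d/dx + Z`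
under the algebraization conditions of Theorem 1. -/
theorem sl2_representation (n : ℕ) (a₀ a₁ a₂ a₃ a₄ b₀ b₁ b₂ b₃ c₀ c₁ c₂ : ℝ)
    (hb₃ : b₃ = -2 * ((n : ℝ) - 1) * a₄)
    (hc₁ : c₁ = -(n : ℝ) * (((n : ℝ) - 1) * a₃ + b₂))
    (hc₂ : c₂ = (n : ℝ) * ((n : ℝ) - 1) * a₄)
    (y : ℝ → ℝ) (hy : ContDiff ℝ 2 y) (x : ℝ) :
    (a₀ + a₁ * x + a₂ * x ^ 2 + a₃ * x ^ 3 + a₄ * x ^ 4) * deriv (deriv y) x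
      + (b₀ + b₁ * x + b₂ * x ^ 2 + b₃ * x ^ 3) * deriv y x
      + (c₀ + c₁ * x + c₂ * x ^ 2) * y x
    = a₄ * Jp n (Jp n y) x - a₃ * Jp n (J0 n y) x + a₂ * J0 n (J0 n y) x
      + a₁ * J0 n (Jm y) x + a₀ * Jm (Jm y) x
      - ((3 * (n : ℝ) - 2) / 2 * a₃ + b₂) * Jp n y x
      + (((n : ℝ) - 1) * a₂ + b₁) * J0 n y x
      + ((n : ℝ) / 2 * a₁ + b₀) * Jm y x
      + (((n : ℝ) / 2) * (((n : ℝ) / 2 - 1) * a₂ + b₁) + c₀) * y x := by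
  have h1 : Differentiable ℝ y := hy.differentiable (by norm_num)
  have h2 : Differentiable ℝ (deriv y) := by
    have : ContDiff ℝ 1 (deriv y) := (contDiff_succ_iff_deriv.mp hy).2.2
    exact this.differentiable one_ne_zero
  have hy1 : ∀ t : ℝ, HasDerivAt y (deriv y t) t := fun t => (h1 t).hasDerivAt
  have hy2 : ∀ t : ℝ, HasDerivAt (deriv y) (deriv (deriv y) t) t :=
    fun t => (h2 t).hasDerivAt
  have hJp : deriv (Jp n y) x
      = -(2 * x) * deriv y x + -x ^ 2 * deriv (deriv y) x
        + ((n : ℝ) * y x + (n : ℝ) * x * deriv y x) := by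
    have A : HasDerivAt (fun t : ℝ => -t ^ 2 * deriv y t)
        (-(2 * x) * deriv y x + -x ^ 2 * deriv (deriv y) x) x := by
      have := ((hasDerivAt_pow 2 x).neg).mul (hy2 x)
      simpa [Pi.mul_def, Pi.neg_def] using this
    have B : HasDerivAt (fun t : ℝ => (n : ℝ) * t * y t)
        ((n : ℝ) * y x + (n : ℝ) * x * deriv y x) x := by
      have := (((hasDerivAt_id x).const_mul (n : ℝ)).mul (hy1 x))
      simpa [mul_comm, Pi.mul_def] using this
    exact (A.add B).deriv
  have hJ0 : deriv (J0 n y) x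
      = (deriv y x + x * deriv (deriv y) x) - ((n : ℝ) / 2) * deriv (deriv y) x
        + ((n : ℝ) / 2) * deriv (deriv y) x
        - ((n : ℝ) / 2) * deriv y x := by
    have A : HasDerivAt (fun t : ℝ => t * deriv y t)
        (deriv y x + x * deriv (deriv y) x) x := by
      have := (hasDerivAt_id x).mul (hy2 x)
      simpa [Pi.mul_def] using this
    have B : HasDerivAt (fun t : ℝ => ((n : ℝ) / 2) * y t)
        (((n : ℝ) / 2) * deriv y x) x := (hy1 x).const_mul _
    have := (A.sub B).deriv
    rw [show ((fun t : ℝ => t * deriv y t) - fun t : ℝ => ((n : ℝ) / 2) * y t) = J0 n y from rfl] at this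
    rw [this]; ring
  have hJm : deriv (Jm y) = deriv (deriv y) := rfl
  simp only [Jp, J0, Jm, hJp, hJ0, hJm, hb₃, hc₁, hc₂]
  ring
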